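/- The group PSL(2,ℤ) is isomorphic to the free product ℤ/2 * ℤ/3. -/

import Mathlib

open Matrix MatrixGroups Subgroup Pointwise

local notation "SL2Z" => Matrix.SpecialLinearGroup (Fin 2) ℤ

noncomputable def mob (g : SL2Z) (x : ℝ) : ℝ :=
  ((g.1 0 0 : ℝ) * x + (g.1 0 1 : ℤ)) / ((g.1 1 0 : ℝ) * x + (g.1 1 1 : ℤ))

lemma det_coe (g : SL2Z) :
    (g.1 0 0 : ℝ) * (g.1 1 1 : ℤ) - (g.1 0 1 : ℝ) * (g.1 1 0 : ℤ) = 1 := by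
  have h := g.2
  rw [det_fin_two] at h
  exact_mod_cast congrArg (fun z : ℤ => (z : ℝ)) h

lemma denom_ne_zero (g : SL2Z) {x : ℝ} (hx : Irrational x) :
    (g.1 1 0 : ℝ) * x + (g.1 1 1 : ℤ) ≠ 0 := by
  rcases eq_or_ne (g.1 1 0) 0 with h | h
  · have hd : g.1 1 1 ≠ 0 := by
      intro h1
      have h2 := g.2
      rw [det_fin_two, h, h1] at h2
      simp at h2
    simp [h]
    exact_mod_cast hd
  · intro hzero
    have hc : (g.1 1 0 : ℝ) ≠ 0 := Int.cast_ne_zero.mpr h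
    apply hx.ne_rat (-(g.1 1 1 : ℚ) / (g.1 1 0 : ℚ))
    push_cast
    field_simp
    linarith

lemma mob_irrational (g : SL2Z) {x : ℝ} (hx : Irrational x) : Irrational (mob g x) := by
  by_contra h
  rw [Irrational, not_not] at h
  obtain ⟨q, hq⟩ := h
  have hden := denom_ne_zero g hx
  have heq : (g.1 0 0 : ℝ) * x + (g.1 0 1 : ℤ) =
      (q : ℝ) * ((g.1 1 0 : ℝ) * x + (g.1 1 1 : ℤ)) := by
    have := hq
    rw [mob] at this
    field_simp at this
    rw [hq, mob, div_mul_cancel₀ _ hden]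
  rcases eq_or_ne ((g.1 0 0 : ℝ) - (q : ℝ) * (g.1 1 0 : ℤ)) 0 with h0 | h0
  · have h1 : ((g.1 0 0 : ℝ) - (q : ℝ) * (g.1 1 0 : ℤ)) * x
        = (q : ℝ) * (g.1 1 1 : ℤ) - (g.1 0 1 : ℤ) := by ring_nf; ring_nf at heq; linarith
    rw [h0, zero_mul] at h1
    have ha : (g.1 0 0 : ℝ) = (q : ℝ) * (g.1 1 0 : ℤ) := by linarith
    have hb : (g.1 0 1 : ℝ) = (q : ℝ) * (g.1 1 1 : ℤ) := by linarith
    have hd := det_coe g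
    rw [ha, hb] at hd
    ring_nf at hd
    exact absurd hd (by norm_num)
  · apply hx.ne_rat (((q : ℚ) * (g.1 1 1 : ℤ) - (g.1 0 1 : ℤ)) / ((g.1 0 0 : ℤ) - (q : ℚ) * (g.1 1 0 : ℤ)))
    have h0' : ((g.1 0 0 : ℚ) - q * (g.1 1 0 : ℤ)) ≠ 0 := by
      intro hz
      apply h0
      exact_mod_cast congrArg (fun z : ℚ => (z : ℝ)) hz
    push_cast
    rw [eq_div_iff (by exact_mod_cast h0')]
    push_cast
    nlinarith [heq]

lemma div_aux (a b c d N D : ℝ) (hD : D ≠ 0) :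
    (a * (N / D) + b) / (c * (N / D) + d) = (a * N + b * D) / (c * N + d * D) := by
  rw [show a * (N / D) + b = (a * N + b * D) / D by field_simp,
      show c * (N / D) + d = (c * N + d * D) / D by field_simp]
  rw [div_div_div_cancel_right₀ hD]

lemma coe_mul_entry (g h : SL2Z) (i j : Fin 2) :
    (g * h).1 i j = g.1 i 0 * h.1 0 j + g.1 i 1 * h.1 1 j := by
  rw [Matrix.SpecialLinearGroup.coe_mul, Matrix.mul_apply, Fin.sum_univ_two]

lemma mob_mul (g h : SL2Z) {x : ℝ} (hx : Irrational x) :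
    mob (g * h) x = mob g (mob h x) := by
  have d1 := denom_ne_zero h hx
  rw [mob, mob, mob, div_aux _ _ _ _ _ _ d1,
      coe_mul_entry, coe_mul_entry, coe_mul_entry, coe_mul_entry]
  push_cast
  congr 1 <;> ring

abbrev Irr : Type := {x : ℝ // Irrational x}

noncomputable instance : MulAction SL2Z Irr where
  smul g x := ⟨mob g x.1, mob_irrational g x.2⟩
  one_smul x := by
    apply Subtype.ext
    show mob 1 x.1 = x.1
    rw [mob]
    have h0 : ((1 : SL2Z) : Matrix (Fin 2) (Fin 2) ℤ) = 1 := rfl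
    rw [h0]
    simp [Matrix.one_apply]
  mul_smul g h x := by
    apply Subtype.ext
    exact mob_mul g h x.2

lemma smul_val (g : SL2Z) (x : Irr) : (g • x).1 = mob g x.1 := rfl

local notation "PSL2Z" => (Matrix.SpecialLinearGroup (Fin 2) ℤ ⧸
    Subgroup.center (Matrix.SpecialLinearGroup (Fin 2) ℤ))

noncomputable def permHom : SL2Z →* Equiv.Perm Irr := MulAction.toPermHom SL2Z Irr

lemma center_le_ker : center SL2Z ≤ permHom.ker := by
  intro A hA
  obtain ⟨r, hr2, hrA⟩ := Matrix.SpecialLinearGroup.mem_center_iff.mp hA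
  rw [Fintype.card_fin, sq] at hr2
  have hr : r = 1 ∨ r = -1 := by
    rcases Int.mul_eq_one_iff_eq_one_or_neg_one.mp hr2 with ⟨h, _⟩ | ⟨h, _⟩
    · exact Or.inl h
    · exact Or.inr h
  have hr0 : (r : ℝ) ≠ 0 := by rcases hr with h | h <;> rw [h] <;> norm_num
  have e00 : A.1 0 0 = r := by
    rw [← hrA, Matrix.scalar_apply]; exact Matrix.diagonal_apply_eq _ 0
  have e01 : A.1 0 1 = 0 := by
    rw [← hrA, Matrix.scalar_apply]; exact Matrix.diagonal_apply_ne _ (by decide)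
  have e10 : A.1 1 0 = 0 := by
    rw [← hrA, Matrix.scalar_apply]; exact Matrix.diagonal_apply_ne _ (by decide)
  have e11 : A.1 1 1 = r := by
    rw [← hrA, Matrix.scalar_apply]; exact Matrix.diagonal_apply_eq _ 1
  rw [MonoidHom.mem_ker]
  ext x
  show mob A x.1 = x.1
  rw [mob, e00, e01, e10, e11]
  push_cast
  field_simp
  rw [mul_zero, add_zero, zero_add, mul_div_cancel_left₀ _ hr0]

noncomputable def pslPerm : PSL2Z →* Equiv.Perm Irr :=
  QuotientGroup.lift (center SL2Z) permHom center_le_ker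

noncomputable instance : MulAction PSL2Z Irr := MulAction.compHom Irr pslPerm

lemma psl_smul_mk (g : SL2Z) (x : Irr) :
    ((QuotientGroup.mk g : PSL2Z) • x) = g • x := rfl

lemma S_T_closure (g : SL2Z) :
    g ∈ Subgroup.closure ({ModularGroup.S, ModularGroup.T} : Set SL2Z) := by
  set Γ := Subgroup.closure ({ModularGroup.S, ModularGroup.T} : Set SL2Z) with hΓ
  have hS : ModularGroup.S ∈ Γ := subset_closure (by simp)
  have hT : ModularGroup.T ∈ Γ := subset_closure (by simp)
  suffices H : ∀ k (g : SL2Z), (g.1 1 0).natAbs = k → g ∈ Γ from H _ g rfl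
  intro k
  induction k using Nat.strong_induction_on with
  | _ k ih =>
    intro g hk
    rcases eq_or_ne (g.1 1 0) 0 with hc | hc
    · have hdet := g.2
      rw [det_fin_two, hc, mul_zero, sub_zero] at hdet
      rcases Int.mul_eq_one_iff_eq_one_or_neg_one.mp hdet with ⟨ha, hd⟩ | ⟨ha, hd⟩
      · have hg : g = ModularGroup.T ^ (g.1 0 1) := by
          apply Subtype.ext
          rw [ModularGroup.coe_T_zpow]
          conv_lhs => rw [Matrix.eta_fin_two g.1]
          rw [ha, hd, hc]
        rw [hg]; exact zpow_mem hT _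
      · have hg : g = ModularGroup.S ^ 2 * ModularGroup.T ^ (-(g.1 0 1)) := by
          apply Subtype.ext
          have h2 : (ModularGroup.S ^ 2 * ModularGroup.T ^ (-(g.1 0 1))).1
              = ModularGroup.S.1 * ModularGroup.S.1 * !![1, -(g.1 0 1); 0, 1] := by
            rw [Matrix.SpecialLinearGroup.coe_mul, ModularGroup.coe_T_zpow, sq,
              Matrix.SpecialLinearGroup.coe_mul]
          rw [h2, ModularGroup.S_mul_S_eq, neg_one_mul]
          conv_lhs => rw [Matrix.eta_fin_two g.1]
          rw [ha, hd, hc]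
          ext i j
          fin_cases i <;> fin_cases j <;> simp
        rw [hg]; exact mul_mem (pow_mem hS 2) (zpow_mem hT _)
    · set a := g.1 0 0 with ha
      set c := g.1 1 0 with hcdef
      set n : ℤ := -(a / c) with hn
      have key : (ModularGroup.S * ModularGroup.T ^ n * g).1 1 0 = a % c := by
        have h1 : (ModularGroup.S * ModularGroup.T ^ n).1 = !![0, -1; 1, n] := by
          rw [Matrix.SpecialLinearGroup.coe_mul, ModularGroup.coe_T_zpow, ModularGroup.coe_S]
          norm_num [Matrix.mul_fin_two]
        rw [Matrix.SpecialLinearGroup.coe_mul, h1, Matrix.mul_apply, Fin.sum_univ_two]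
        norm_num
        rw [Int.emod_def]
        ring
      have habs : a % c < |c| := by
        rcases lt_or_gt_of_ne hc with hneg | hpos
        · have h1 : a % c = a % (-c) := by rw [← Int.emod_neg a (-c), neg_neg]
          rw [h1, abs_of_neg hneg]
          exact Int.emod_lt_of_pos a (by linarith)
        · rw [abs_of_pos hpos]
          exact Int.emod_lt_of_pos a hpos
      have hlt : (a % c).natAbs < k := by
        rw [← hk]
        have := Int.natAbs_lt_natAbs_of_nonneg_of_lt (Int.emod_nonneg a hc) habs
        rwa [Int.natAbs_abs] at this
      have h1 := ih _ hlt _ (by rw [key])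
      have h2 : g = (ModularGroup.T ^ n)⁻¹ * ModularGroup.S⁻¹ *
          (ModularGroup.S * ModularGroup.T ^ n * g) := by group
      rw [h2]
      exact mul_mem (mul_mem (inv_mem (zpow_mem hT n)) (inv_mem hS)) h1

def Rm : SL2Z := ModularGroup.S * ModularGroup.T

lemma coe_R : Rm.1 = !![0,-1;1,1] := by
  rw [Rm, Matrix.SpecialLinearGroup.coe_mul, ModularGroup.coe_S, ModularGroup.coe_T]
  norm_num [Matrix.mul_fin_two]

lemma closure_S_R (g : SL2Z) : g ∈ Subgroup.closure ({ModularGroup.S, Rm} : Set SL2Z) := by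
  have h := S_T_closure g
  have hsub : Subgroup.closure ({ModularGroup.S, ModularGroup.T} : Set SL2Z)
      ≤ Subgroup.closure {ModularGroup.S, Rm} := by
    rw [closure_le]
    intro x hx
    simp only [Set.mem_insert_iff, Set.mem_singleton_iff] at hx
    rcases hx with rfl | rfl
    · exact subset_closure (Or.inl rfl)
    · have hT : ModularGroup.T = ModularGroup.S⁻¹ * Rm := by rw [Rm]; group
      rw [hT]
      exact mul_mem (inv_mem (subset_closure (Or.inl rfl))) (subset_closure (Or.inr rfl))
  exact hsub h

lemma S_sq_center : ModularGroup.S ^ 2 ∈ center SL2Z := by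
  refine Matrix.SpecialLinearGroup.mem_center_iff.mpr ⟨-1, by norm_num, ?_⟩
  rw [sq, Matrix.SpecialLinearGroup.coe_mul, ModularGroup.S_mul_S_eq]
  simp

lemma R_cube_center : Rm ^ 3 ∈ center SL2Z := by
  refine Matrix.SpecialLinearGroup.mem_center_iff.mpr ⟨-1, by norm_num, ?_⟩
  have h3 : Rm ^ 3 = Rm * Rm * Rm := by rw [pow_succ, pow_two]
  rw [h3, Matrix.SpecialLinearGroup.coe_mul, Matrix.SpecialLinearGroup.coe_mul, coe_R]
  norm_num [Matrix.mul_fin_two]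
  ext i j
  fin_cases i <;> fin_cases j <;> simp

noncomputable def σ : PSL2Z := QuotientGroup.mk' (center SL2Z) ModularGroup.S
noncomputable def ρ : PSL2Z := QuotientGroup.mk' (center SL2Z) Rm

lemma sigma_sq : σ ^ 2 = 1 := by
  rw [σ, ← map_pow]
  exact (QuotientGroup.eq_one_iff _).mpr S_sq_center

lemma rho_cube : ρ ^ 3 = 1 := by
  rw [ρ, ← map_pow]
  exact (QuotientGroup.eq_one_iff _).mpr R_cube_center

lemma sigma_smul (x : Irr) : (σ • x).1 = -1 / x.1 := by
  have h : (σ • x) = ModularGroup.S • x := rfl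
  rw [h, smul_val, mob, ModularGroup.coe_S]
  norm_num

lemma rho_smul (x : Irr) : (ρ • x).1 = -1 / (x.1 + 1) := by
  have h : (ρ • x) = Rm • x := rfl
  rw [h, smul_val, mob, coe_R]
  norm_num

lemma rho_sq_smul (x : Irr) : ((ρ * ρ) • x).1 = (-x.1 - 1) / x.1 := by
  have h : ((ρ * ρ) • x) = (Rm * Rm) • x := rfl
  have hRR : (Rm * Rm).1 = !![-1,-1;1,0] := by
    rw [Matrix.SpecialLinearGroup.coe_mul, coe_R]
    norm_num [Matrix.mul_fin_two]
  rw [h, smul_val, mob, hRR]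
  push_cast
  norm_num
  ring_nf

lemma pow_mod_eq {G : Type*} [Group G] {n : ℕ} {g : G} (hg : g ^ n = 1) (m : ℕ) :
    g ^ (m % n) = g ^ m := by
  conv_rhs => rw [← Nat.div_add_mod m n]
  rw [pow_add, pow_mul, hg, one_pow, one_mul]

def zmodHom {G : Type*} [Group G] (n : ℕ) [NeZero n] (g : G) (hg : g ^ n = 1) :
    Multiplicative (ZMod n) →* G where
  toFun x := g ^ (Multiplicative.toAdd x).val
  map_one' := by
    show g ^ (0 : ZMod n).val = 1
    rw [ZMod.val_zero, pow_zero]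
  map_mul' x y := by
    show g ^ ((Multiplicative.toAdd x + Multiplicative.toAdd y).val) = _
    rw [ZMod.val_add, pow_mod_eq hg, pow_add]

lemma zmodHom_apply {G : Type*} [Group G] (n : ℕ) [NeZero n] (g : G) (hg : g ^ n = 1)
    (x : ZMod n) : zmodHom n g hg (Multiplicative.ofAdd x) = g ^ x.val := rfl

def Hfam : Bool → Type := fun b => bif b then Multiplicative (ZMod 2) else Multiplicative (ZMod 3)

instance (b : Bool) : Group (Hfam b) :=
  match b with
  | true => inferInstanceAs (Group (Multiplicative (ZMod 2)))
  | false => inferInstanceAs (Group (Multiplicative (ZMod 3)))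

noncomputable def Ffam : ∀ b, Hfam b →* PSL2Z := fun b =>
  match b with
  | true => zmodHom 2 σ sigma_sq
  | false => zmodHom 3 ρ rho_cube

noncomputable def φ : Monoid.CoprodI Hfam →* PSL2Z := Monoid.CoprodI.lift Ffam

def Xfam : Bool → Set Irr := fun b => bif b then {x : Irr | 0 < x.1} else {x : Irr | x.1 < 0}

lemma mem_Xtrue {x : Irr} : x ∈ Xfam true ↔ 0 < x.1 := Iff.rfl
lemma mem_Xfalse {x : Irr} : x ∈ Xfam false ↔ x.1 < 0 := Iff.rfl

lemma hXne : ∀ b, (Xfam b).Nonempty := by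
  intro b
  cases b
  · exact ⟨⟨-Real.sqrt 2, irrational_sqrt_two.neg⟩, by
      rw [mem_Xfalse]
      have : 0 < Real.sqrt 2 := Real.sqrt_pos.mpr (by norm_num)
      simpa using this⟩
  · exact ⟨⟨Real.sqrt 2, irrational_sqrt_two⟩, by
      rw [mem_Xtrue]
      exact Real.sqrt_pos.mpr (by norm_num)⟩

lemma hXdisj : Pairwise (Function.onFun Disjoint Xfam) := by
  intro i j hij
  have key : Disjoint (Xfam true) (Xfam false) := by
    rw [Set.disjoint_left]
    intro x hx hx'
    rw [mem_Xtrue] at hx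
    rw [mem_Xfalse] at hx'
    linarith
  cases i <;> cases j
  · exact absurd rfl hij
  · exact key.symm
  · exact key
  · exact absurd rfl hij

lemma Ffam_true_apply : Ffam true (Multiplicative.ofAdd (1 : ZMod 2)) = σ := by
  show σ ^ (1 : ZMod 2).val = σ
  rw [show (1 : ZMod 2).val = 1 by decide, pow_one]

lemma Ffam_false_apply1 : Ffam false (Multiplicative.ofAdd (1 : ZMod 3)) = ρ := by
  show ρ ^ (1 : ZMod 3).val = ρ
  rw [show (1 : ZMod 3).val = 1 by decide, pow_one]

lemma Ffam_false_apply2 : Ffam false (Multiplicative.ofAdd (2 : ZMod 3)) = ρ * ρ := by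
  show ρ ^ (2 : ZMod 3).val = ρ * ρ
  rw [show (2 : ZMod 3).val = 2 by decide, sq]

lemma hpp : Pairwise fun i j => ∀ h : Hfam i, h ≠ 1 → Ffam i h • Xfam j ⊆ Xfam i := by
  intro i j hij
  cases i <;> cases j
  · exact absurd rfl hij
  · -- i = false (ZMod 3), j = true
    intro h hne
    have hcases : ∀ h : Multiplicative (ZMod 3), h ≠ 1 →
        h = Multiplicative.ofAdd 1 ∨ h = Multiplicative.ofAdd 2 := by decide
    have hval : Ffam false h = ρ ∨ Ffam false h = ρ * ρ := by
      rcases hcases h hne with rfl | rfl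
      · exact Or.inl Ffam_false_apply1
      · exact Or.inr Ffam_false_apply2
    intro y hy
    obtain ⟨x, hx, rfl⟩ := Set.mem_smul_set.mp hy
    rw [mem_Xtrue] at hx
    rw [mem_Xfalse]
    rcases hval with h1 | h1
    · rw [h1, rho_smul]
      exact div_neg_of_neg_of_pos (by norm_num) (by linarith)
    · rw [h1, rho_sq_smul]
      exact div_neg_of_neg_of_pos (by linarith) hx
  · -- i = true (ZMod 2), j = false
    intro h hne
    have hcases : ∀ h : Multiplicative (ZMod 2), h ≠ 1 → h = Multiplicative.ofAdd 1 := by decide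
    have hval : Ffam true h = σ := by
      rw [hcases h hne]; exact Ffam_true_apply
    intro y hy
    obtain ⟨x, hx, rfl⟩ := Set.mem_smul_set.mp hy
    rw [mem_Xfalse] at hx
    rw [mem_Xtrue]
    rw [hval, sigma_smul]
    exact div_pos_of_neg_of_neg (by norm_num) hx
  · exact absurd rfl hij

lemma hcard : 3 ≤ Cardinal.mk Bool ∨ ∃ i, 3 ≤ Cardinal.mk (Hfam i) := by
  right
  refine ⟨false, ?_⟩
  rw [show Hfam false = Multiplicative (ZMod 3) from rfl]
  rw [Cardinal.mk_fintype]
  norm_num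

lemma phi_injective : Function.Injective φ :=
  Monoid.CoprodI.lift_injective_of_ping_pong Ffam hcard Xfam hXne hXdisj hpp

lemma phi_surjective : Function.Surjective φ := by
  rw [← MonoidHom.range_eq_top]
  rw [eq_top_iff]
  have h1 : Subgroup.closure ({σ, ρ} : Set PSL2Z) = ⊤ := by
    have himg : ({σ, ρ} : Set PSL2Z)
        = (QuotientGroup.mk' (center SL2Z)) '' {ModularGroup.S, Rm} := by
      rw [Set.image_insert_eq, Set.image_singleton]
      rfl
    have hc : Subgroup.closure ({ModularGroup.S, Rm} : Set SL2Z) = ⊤ :=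
      eq_top_iff.mpr fun g _ => closure_S_R g
    rw [himg, ← MonoidHom.map_closure, hc]
    exact Subgroup.map_top_of_surjective _ (QuotientGroup.mk'_surjective _)
  rw [← h1, closure_le]
  intro x hx
  simp only [Set.mem_insert_iff, Set.mem_singleton_iff] at hx
  rcases hx with rfl | rfl
  · exact ⟨Monoid.CoprodI.of (i := true) (Multiplicative.ofAdd (1 : ZMod 2)), by
      rw [φ]; exact (Monoid.CoprodI.lift_of _ _).trans Ffam_true_apply⟩
  · exact ⟨Monoid.CoprodI.of (i := false) (Multiplicative.ofAdd (1 : ZMod 3)), by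
      rw [φ]; exact (Monoid.CoprodI.lift_of _ _).trans Ffam_false_apply1⟩

def jHom : Monoid.Coprod (Multiplicative (ZMod 2)) (Multiplicative (ZMod 3)) →*
    Monoid.CoprodI Hfam :=
  Monoid.Coprod.lift (Monoid.CoprodI.of (M := Hfam) (i := true))
    (Monoid.CoprodI.of (M := Hfam) (i := false))

def kHom : Monoid.CoprodI Hfam →*
    Monoid.Coprod (Multiplicative (ZMod 2)) (Multiplicative (ZMod 3)) :=
  Monoid.CoprodI.lift (fun b =>
    match b with
    | true => Monoid.Coprod.inl
    | false => Monoid.Coprod.inr)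

lemma kj : kHom.comp jHom = MonoidHom.id _ := by
  apply Monoid.Coprod.hom_ext <;> refine MonoidHom.ext fun x => ?_ <;>
    simp only [jHom, kHom, MonoidHom.comp_apply, MonoidHom.id_apply,
      Monoid.Coprod.lift_apply_inl, Monoid.Coprod.lift_apply_inr] <;>
    exact Monoid.CoprodI.lift_of _ _

lemma jk : jHom.comp kHom = MonoidHom.id _ := by
  apply Monoid.CoprodI.ext_hom
  intro b
  cases b <;> ext x <;>
    simp only [jHom, kHom, MonoidHom.comp_apply, MonoidHom.id_apply] <;>
    exact Monoid.CoprodI.lift_of _ _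

def coprodEquiv : Monoid.Coprod (Multiplicative (ZMod 2)) (Multiplicative (ZMod 3)) ≃*
    Monoid.CoprodI Hfam :=
  MonoidHom.toMulEquiv jHom kHom kj jk

/-- `PSL(2,ℤ) = SL(2,ℤ)/{±I}` is isomorphic to the free product `ℤ/2 * ℤ/3`. -/
theorem stmt5 :
    Nonempty ((Matrix.SpecialLinearGroup (Fin 2) ℤ ⧸
        Subgroup.center (Matrix.SpecialLinearGroup (Fin 2) ℤ)) ≃*
      Monoid.Coprod (Multiplicative (ZMod 2)) (Multiplicative (ZMod 3))) := by
  exact ⟨(coprodEquiv.trans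
    (MulEquiv.ofBijective φ ⟨phi_injective, phi_surjective⟩)).symm⟩
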